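/- arXiv:2007.02648 — 4 statements merged into one kernel-verified Lean document; each statement's English description precedes it below -/
import Mathlib

section
/- Let C := (QA + B)ᵀ(QA + B) with Q the random transmission matrix of the DFA scheme built from coefficients a_1,…,a_K ∈ [0,P] with Σ_{k=1}^K a_k ≤ Δ(f‖P), and let A_i ∈ ℝ^{2KM×(2KM+2M)} be user-uncorrelated (writing A_i as 2M vertically stacked K×(2KM+2M) blocks, each block has at most one nonzero entry per column). Then the sub-Gaussian norm of the random variable tr(C) satisfies τ(tr C) ≤ 4·M·Δ(f‖P)·‖(A + A_i)(A − A_i)ᵀ‖_op + 2·√(2P)·‖ABᵀ‖_F. -/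
open MeasureTheory ProbabilityTheory Real Matrix

noncomputable def vecNorm {ι : Type*} [Fintype ι] (x : ι → ℝ) : ℝ :=
  Real.sqrt (∑ i, (x i) ^ 2)

/-- Operator (spectral) norm of a real matrix. -/
noncomputable def opNorm {ι κ : Type*} [Fintype ι] [Fintype κ] (A : Matrix ι κ ℝ) : ℝ :=
  sSup {c : ℝ | ∃ x : κ → ℝ, vecNorm x ≤ 1 ∧ c = vecNorm (A.mulVec x)}

/-- Frobenius norm of a real matrix. -/
noncomputable def frobNorm {ι κ : Type*} [Fintype ι] [Fintype κ] (A : Matrix ι κ ℝ) : ℝ :=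
  Real.sqrt (∑ i, ∑ j, (A i j) ^ 2)

/-- The sub-Gaussian norm of a real random variable:
`τ(X) := inf{t > 0 : ∀ λ ∈ ℝ, E exp(λ(X − EX)) ≤ exp(λ²t²/2)}`. -/
noncomputable def subGaussianNorm {Ω : Type*} [MeasureSpace Ω] (X : Ω → ℝ) : ℝ :=
  sInf {t : ℝ | 0 < t ∧ ∀ l : ℝ,
    (∫ ω, Real.exp (l * (X ω - ∫ ω', X ω'))) ≤ Real.exp (l ^ 2 * t ^ 2 / 2)}

section LA
variable {ι κ : Type*} [Fintype ι] [Fintype κ]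

lemma vecNorm_nonneg (x : ι → ℝ) : 0 ≤ vecNorm x := Real.sqrt_nonneg _

lemma sq_vecNorm (x : ι → ℝ) : vecNorm x ^ 2 = ∑ i, x i ^ 2 :=
  Real.sq_sqrt (by positivity)

lemma vecNorm_smul (c : ℝ) (x : ι → ℝ) : vecNorm (c • x) = |c| * vecNorm x := by
  unfold vecNorm
  rw [← Real.sqrt_sq_eq_abs, ← Real.sqrt_mul (sq_nonneg c)]
  congr 1
  simp [Finset.mul_sum, mul_pow]

lemma vecNorm_eq_zero_iff {x : ι → ℝ} : vecNorm x = 0 ↔ x = 0 := by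
  unfold vecNorm
  rw [Real.sqrt_eq_zero (by positivity)]
  constructor
  · intro h
    funext i
    have h2 : ∀ j ∈ Finset.univ, (0:ℝ) ≤ x j ^ 2 := fun j _ => sq_nonneg _
    have := (Finset.sum_eq_zero_iff_of_nonneg h2).1 h i (Finset.mem_univ i)
    exact pow_eq_zero_iff (n := 2) (by norm_num) |>.1 this
  · rintro rfl; simp

lemma bddAbove_opSet (A : Matrix ι κ ℝ) :
    BddAbove {c : ℝ | ∃ x : κ → ℝ, vecNorm x ≤ 1 ∧ c = vecNorm (A.mulVec x)} := by
  refine ⟨Real.sqrt (∑ i, ∑ j, (A i j) ^ 2), ?_⟩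
  rintro c ⟨x, hx, rfl⟩
  unfold vecNorm
  apply Real.sqrt_le_sqrt
  have hx2 : ∑ j, x j ^ 2 ≤ 1 := by
    have := sq_vecNorm x
    nlinarith [vecNorm_nonneg x]
  refine Finset.sum_le_sum fun i _ => ?_
  calc (A.mulVec x i) ^ 2 = (∑ j, A i j * x j) ^ 2 := by rfl
    _ ≤ (∑ j, (A i j) ^ 2) * ∑ j, x j ^ 2 := Finset.sum_mul_sq_le_sq_mul_sq _ _ _
    _ ≤ (∑ j, (A i j) ^ 2) * 1 := by
        apply mul_le_mul_of_nonneg_left hx2 (by positivity)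
    _ = ∑ j, (A i j) ^ 2 := mul_one _

lemma opNorm_nonneg (A : Matrix ι κ ℝ) : 0 ≤ opNorm A := by
  have h0 : (0:ℝ) ∈ {c : ℝ | ∃ x : κ → ℝ, vecNorm x ≤ 1 ∧ c = vecNorm (A.mulVec x)} := by
    refine ⟨0, ?_, ?_⟩
    · simp [vecNorm]
    · simp [Matrix.mulVec_zero, vecNorm]
  exact le_csSup (bddAbove_opSet A) h0

lemma vecNorm_mulVec_le (A : Matrix ι κ ℝ) (x : κ → ℝ) :
    vecNorm (A.mulVec x) ≤ opNorm A * vecNorm x := by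
  rcases eq_or_ne x 0 with rfl | hx
  · simp [Matrix.mulVec_zero, vecNorm, opNorm_nonneg A]
  · have hnx : 0 < vecNorm x := by
      rcases lt_or_eq_of_le (vecNorm_nonneg x) with h | h
      · exact h
      · exact absurd (vecNorm_eq_zero_iff.1 h.symm) hx
    have h1 : vecNorm ((vecNorm x)⁻¹ • x) = 1 := by
      rw [vecNorm_smul, abs_of_pos (inv_pos.2 hnx), inv_mul_cancel₀ hnx.ne']
    have hmem : vecNorm (A.mulVec ((vecNorm x)⁻¹ • x)) ∈
        {c : ℝ | ∃ y : κ → ℝ, vecNorm y ≤ 1 ∧ c = vecNorm (A.mulVec y)} :=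
      ⟨_, h1.le, rfl⟩
    have hle := le_csSup (bddAbove_opSet A) hmem
    have h2 : A.mulVec ((vecNorm x)⁻¹ • x) = (vecNorm x)⁻¹ • A.mulVec x := by
      rw [Matrix.mulVec_smul]
    rw [h2, vecNorm_smul, abs_of_pos (inv_pos.2 hnx)] at hle
    calc vecNorm (A.mulVec x) = vecNorm x * ((vecNorm x)⁻¹ * vecNorm (A.mulVec x)) := by
          field_simp
      _ ≤ vecNorm x * opNorm A := by
          apply mul_le_mul_of_nonneg_left hle hnx.le
      _ = opNorm A * vecNorm x := mul_comm _ _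

lemma abs_quad_le (W : Matrix ι ι ℝ) (x : ι → ℝ) :
    |∑ j, x j * W.mulVec x j| ≤ opNorm W * ∑ j, x j ^ 2 := by
  have hcs : |∑ j, x j * W.mulVec x j| ≤ vecNorm x * vecNorm (W.mulVec x) := by
    have := Finset.sum_mul_sq_le_sq_mul_sq Finset.univ x (W.mulVec x)
    rw [← Real.sqrt_sq_eq_abs]
    unfold vecNorm
    rw [← Real.sqrt_mul (by positivity)]
    exact Real.sqrt_le_sqrt this
  calc |∑ j, x j * W.mulVec x j| ≤ vecNorm x * vecNorm (W.mulVec x) := hcs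
    _ ≤ vecNorm x * (opNorm W * vecNorm x) := by
        apply mul_le_mul_of_nonneg_left (vecNorm_mulVec_le W x) (vecNorm_nonneg x)
    _ = opNorm W * (vecNorm x * vecNorm x) := by ring
    _ = opNorm W * ∑ j, x j ^ 2 := by rw [← sq, sq_vecNorm]

lemma quad_diff (A Ai : Matrix ι κ ℝ) (y : ι → ℝ) :
    (∑ c, (∑ j, y j * A j c) ^ 2) - (∑ c, (∑ j, y j * Ai j c) ^ 2)
      = ∑ j, y j * (((A + Ai) * (A - Ai).transpose).mulVec y) j := by
  have key : ∀ c, (∑ j, y j * A j c) ^ 2 - (∑ j, y j * Ai j c) ^ 2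
      = (∑ j, y j * (A j c + Ai j c)) * (∑ j, y j * (A j c - Ai j c)) := by
    intro c
    have h1 : (∑ j, y j * (A j c + Ai j c)) = (∑ j, y j * A j c) + ∑ j, y j * Ai j c := by
      rw [← Finset.sum_add_distrib]; apply Finset.sum_congr rfl; intros; ring
    have h2 : (∑ j, y j * (A j c - Ai j c)) = (∑ j, y j * A j c) - ∑ j, y j * Ai j c := by
      rw [← Finset.sum_sub_distrib]; apply Finset.sum_congr rfl; intros; ring
    rw [h1, h2]; ring
  rw [← Finset.sum_sub_distrib]
  rw [Finset.sum_congr rfl fun c _ => key c]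
  calc ∑ c, (∑ j, y j * (A j c + Ai j c)) * ∑ j, y j * (A j c - Ai j c)
      = ∑ c, ∑ j, ∑ j', (y j * (A j c + Ai j c)) * (y j' * (A j' c - Ai j' c)) :=
        Finset.sum_congr rfl fun c _ => Finset.sum_mul_sum _ _ _ _
    _ = ∑ j, ∑ c, ∑ j', (y j * (A j c + Ai j c)) * (y j' * (A j' c - Ai j' c)) :=
        Finset.sum_comm
    _ = ∑ j, ∑ j', ∑ c, (y j * (A j c + Ai j c)) * (y j' * (A j' c - Ai j' c)) :=
        Finset.sum_congr rfl fun j _ => Finset.sum_comm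
    _ = ∑ j, y j * (((A + Ai) * (A - Ai).transpose).mulVec y) j := by
        simp only [Matrix.mulVec, Matrix.mul_apply, dotProduct, Matrix.transpose_apply,
          Matrix.add_apply, Matrix.sub_apply, Finset.mul_sum, Finset.sum_mul]
        exact Finset.sum_congr rfl fun j _ => Finset.sum_congr rfl fun j' _ =>
          Finset.sum_congr rfl fun c _ => by ring

end LA

section Prob
variable {Ω : Type*} [MeasureSpace Ω] [IsProbabilityMeasure (volume : Measure Ω)]

lemma pm_union_ae {V : Ω → ℝ} (hV : Measurable V)
    (h1 : volume {ω | V ω = 1} = 1/2) (h2 : volume {ω | V ω = -1} = 1/2) :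
    ∀ᵐ ω, V ω = 1 ∨ V ω = -1 := by
  have hA : MeasurableSet {ω | V ω = 1} := hV (measurableSet_singleton 1)
  have hB : MeasurableSet {ω | V ω = -1} := hV (measurableSet_singleton (-1))
  have hdisj : Disjoint {ω | V ω = 1} {ω | V ω = -1} := by
    rw [Set.disjoint_left]
    intro ω hω1 hω2
    simp only [Set.mem_setOf_eq] at hω1 hω2
    rw [hω1] at hω2; norm_num at hω2
  have hu : volume ({ω | V ω = 1} ∪ {ω | V ω = -1}) = 1 := by
    rw [measure_union hdisj hB, h1, h2]
    rw [ENNReal.div_add_div_same, one_add_one_eq_two]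
    exact ENNReal.div_self (two_ne_zero) (ENNReal.ofNat_ne_top)
  have hcompl : volume ({ω | V ω = 1} ∪ {ω | V ω = -1})ᶜ = 0 := by
    rw [measure_compl (hA.union hB) (measure_ne_top _ _), hu, measure_univ, tsub_self]
  have hset : {ω | ¬(V ω = 1 ∨ V ω = -1)} = ({ω | V ω = 1} ∪ {ω | V ω = -1})ᶜ := by
    ext ω; simp [not_or]
  rw [ae_iff, hset]
  exact hcompl

lemma integral_pm {V : Ω → ℝ} (hV : Measurable V)
    (h1 : volume {ω | V ω = 1} = 1/2) (h2 : volume {ω | V ω = -1} = 1/2) (f : ℝ → ℝ) :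
    ∫ ω, f (V ω) = (f 1 + f (-1)) / 2 := by
  have hA : MeasurableSet {ω | V ω = 1} := hV (measurableSet_singleton 1)
  have hB : MeasurableSet {ω | V ω = -1} := hV (measurableSet_singleton (-1))
  have hae := pm_union_ae hV h1 h2
  have heq : (fun ω => f (V ω)) =ᵐ[volume]
      (fun ω => Set.indicator {ω | V ω = 1} (fun _ => f 1) ω
        + Set.indicator {ω | V ω = -1} (fun _ => f (-1)) ω) := by
    filter_upwards [hae] with ω hω
    rcases hω with h | h
    · have hnB : ω ∉ {ω | V ω = -1} := by simp only [Set.mem_setOf_eq]; rw [h]; norm_num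
      rw [Set.indicator_of_mem (by exact h) , Set.indicator_of_notMem hnB, h, add_zero]
    · have hnA : ω ∉ {ω | V ω = 1} := by simp only [Set.mem_setOf_eq]; rw [h]; norm_num
      rw [Set.indicator_of_notMem hnA, Set.indicator_of_mem (by exact h), h, zero_add]
  rw [integral_congr_ae heq]
  have hi1 : Integrable (fun ω => Set.indicator {ω | V ω = 1} (fun _ => f 1) ω) volume := by
    apply (integrable_indicator_iff hA).2
    exact (integrableOn_const_iff).2 (Or.inr (by rw [h1]; exact lt_of_lt_of_le (ENNReal.half_lt_self one_ne_zero ENNReal.one_ne_top) le_top))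
  have hi2 : Integrable (fun ω => Set.indicator {ω | V ω = -1} (fun _ => f (-1)) ω) volume := by
    apply (integrable_indicator_iff hB).2
    exact (integrableOn_const_iff).2 (Or.inr (by rw [h2]; exact lt_of_lt_of_le (ENNReal.half_lt_self one_ne_zero ENNReal.one_ne_top) le_top))
  rw [integral_add hi1 hi2, integral_indicator_const _ hA, integral_indicator_const _ hB,
    measureReal_def, measureReal_def, h1, h2]
  simp only [smul_eq_mul]
  rw [ENNReal.toReal_div]
  simp
  ring

lemma hoeffding_sym {Y : Ω → ℝ} (hmeas : Measurable Y) {C : ℝ} (hC : 0 < C)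
    (hbd : ∀ᵐ ω, |Y ω| ≤ C) (hmean : (∫ ω, Y ω) = 0) (l : ℝ) :
    ∫ ω, Real.exp (l * Y ω) ≤ Real.exp (l ^ 2 * C ^ 2 / 2) := by
  have hYint : Integrable Y := by
    refine Integrable.mono' (integrable_const C) hmeas.aestronglyMeasurable ?_
    filter_upwards [hbd] with ω h using by rwa [Real.norm_eq_abs]
  have hpt : ∀ᵐ ω, Real.exp (l * Y ω)
      ≤ Real.cosh (l * C) + (Y ω / C) * Real.sinh (l * C) := by
    filter_upwards [hbd] with ω h
    have h1 : -C ≤ Y ω := (abs_le.1 h).1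
    have h2 : Y ω ≤ C := (abs_le.1 h).2
    set θ : ℝ := (C + Y ω) / (2 * C) with hθ
    have hθ0 : 0 ≤ θ := div_nonneg (by linarith) (by linarith)
    have hθ1 : 0 ≤ 1 - θ := by
      rw [hθ]; rw [sub_nonneg, div_le_one (by positivity)]; linarith
    have hsum : θ + (1 - θ) = 1 := by ring
    have hconv := convexOn_exp.2 (Set.mem_univ (l * C)) (Set.mem_univ (-(l * C)))
      hθ0 hθ1 hsum
    have harg : θ • (l * C) + (1 - θ) • (-(l * C)) = l * Y ω := by
      simp only [smul_eq_mul, hθ]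
      field_simp
      ring
    rw [harg] at hconv
    refine hconv.trans (le_of_eq ?_)
    simp only [smul_eq_mul, Real.cosh_eq, Real.sinh_eq, hθ]
    field_simp
    ring
  have hint1 : Integrable (fun ω => Real.exp (l * Y ω)) := by
    refine Integrable.mono' (integrable_const (Real.exp (|l| * C)))
      ((hmeas.const_mul l).exp).aestronglyMeasurable ?_
    filter_upwards [hbd] with ω h
    rw [Real.norm_eq_abs, Real.abs_exp, Real.exp_le_exp]
    calc l * Y ω ≤ |l * Y ω| := le_abs_self _
      _ = |l| * |Y ω| := abs_mul _ _
      _ ≤ |l| * C := by apply mul_le_mul_of_nonneg_left h (abs_nonneg l)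
  have hint2 : Integrable (fun ω => Real.cosh (l * C) + (Y ω / C) * Real.sinh (l * C)) := by
    apply Integrable.add (integrable_const _)
    exact ((hYint.div_const C).mul_const _)
  calc (∫ ω, Real.exp (l * Y ω))
      ≤ ∫ ω, (Real.cosh (l * C) + (Y ω / C) * Real.sinh (l * C)) :=
        integral_mono_ae hint1 hint2 hpt
    _ = Real.cosh (l * C) := by
        rw [integral_add (integrable_const _) ((hYint.div_const C).mul_const _),
          integral_const, integral_mul_const, integral_div, hmean]
        simp
    _ ≤ Real.exp ((l * C) ^ 2 / 2) := Real.cosh_le_exp_half_sq _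
    _ = Real.exp (l ^ 2 * C ^ 2 / 2) := by rw [mul_pow]

end Prob

lemma sq_sum_of_unique {K : ℕ} (b : Fin K → ℝ)
    (h : ∀ k₁ k₂, b k₁ ≠ 0 → b k₂ ≠ 0 → k₁ = k₂) :
    (∑ k, b k) ^ 2 = ∑ k, (b k) ^ 2 := by
  rw [sq, Finset.sum_mul_sum]
  refine Finset.sum_congr rfl fun k _ => ?_
  rw [Finset.sum_eq_single k]
  · rw [sq]
  · intro k' _ hne
    by_cases hbk' : b k' = 0
    · rw [hbk', mul_zero]
    · by_cases hbk : b k = 0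
      · rw [hbk, zero_mul]
      · exact absurd (h k' k hbk' hbk) hne
  · intro h'; exact absurd (Finset.mem_univ k) h'


set_option maxHeartbeats 1000000 in
/-- Sub-Gaussian norm bound on `tr C` where `C = (QA+B)ᵀ(QA+B)`, with `Q` the random DFA
transmission matrix and `A_i` a user-uncorrelated matrix (each of its `2M` stacked `K`-row
blocks has at most one nonzero entry per column):
`τ(tr C) ≤ 4MΔ(f‖P)·‖(A+A_i)(A−A_i)ᵀ‖_op + 2√(2P)·‖ABᵀ‖_F`.

Index conventions: rows of `Q` are indexed by `Fin M × Fin 2` (channel use,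
real/imaginary part), its columns by `(Fin M × Fin 2) × Fin K`, and the columns of `A`,
`A_i` and `B` by the sum of these two index types (`2KM + 2M` coordinates). -/
theorem dfa_trace_subGaussianNorm_bound
    (K M : ℕ) (hK : 0 < K) (hM : 0 < M)
    (P ΔfP : ℝ) (hP : 0 < P) (hΔfP : 0 < ΔfP)
    (a : Fin K → ℝ) (ha : ∀ k, a k ∈ Set.Icc (0 : ℝ) P) (hsum : (∑ k, a k) ≤ ΔfP)
    {Ω : Type*} [MeasureSpace Ω] [IsProbabilityMeasure (volume : Measure Ω)]
    (U : Ω → Fin M → Fin K → ℝ)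
    (hUmeas : ∀ m k, Measurable fun ω => U ω m k)
    -- the U_k(m) are i.i.d. uniform on {−1, +1}
    (hUdist : ∀ m k, volume {ω | U ω m k = 1} = 1/2 ∧ volume {ω | U ω m k = -1} = 1/2)
    (hUindep : iIndepFun
      (fun (p : Fin M × Fin K) ω => U ω p.1 p.2) volume)
    (A Ai : Matrix ((Fin M × Fin 2) × Fin K) (((Fin M × Fin 2) × Fin K) ⊕ (Fin M × Fin 2)) ℝ)
    (B : Matrix (Fin M × Fin 2) (((Fin M × Fin 2) × Fin K) ⊕ (Fin M × Fin 2)) ℝ)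
    -- A_i is user-uncorrelated
    (hAi : ∀ (mi : Fin M × Fin 2) c (k₁ k₂ : Fin K),
      Ai (mi, k₁) c ≠ 0 → Ai (mi, k₂) c ≠ 0 → k₁ = k₂)
    (Q : Ω → Matrix (Fin M × Fin 2) ((Fin M × Fin 2) × Fin K) ℝ)
    (hQ : ∀ ω mi mik, Q ω mi mik =
      if mik.1 = mi then Real.sqrt (a mik.2) * U ω mik.1.1 mik.2 else 0) :
    subGaussianNorm (fun ω => Matrix.trace ((Q ω * A + B).transpose * (Q ω * A + B))) ≤
      4 * M * ΔfP * opNorm ((A + Ai) * (A - Ai).transpose) +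
        2 * Real.sqrt (2 * P) * frobNorm (A * B.transpose) := by
  classical
  set W : Matrix ((Fin M × Fin 2) × Fin K) ((Fin M × Fin 2) × Fin K) ℝ :=
    (A + Ai) * (A - Ai).transpose with hW
  set op : ℝ := opNorm W with hopdef
  have hop0 : 0 ≤ op := opNorm_nonneg W
  set F : ℝ := frobNorm (A * B.transpose) with hFdef
  have hF0 : 0 ≤ F := Real.sqrt_nonneg _
  set v : (Fin M × Fin 2) → (((Fin M × Fin 2) × Fin K) ⊕ (Fin M × Fin 2)) → Ω → ℝ :=
    fun r c ω => ∑ k, Real.sqrt (a k) * U ω r.1 k * A (r, k) c with hv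
  set S1 : Ω → ℝ := fun ω => ∑ r, ∑ c, (v r c ω) ^ 2 with hS1
  set cz : Fin M × Fin K → ℝ :=
    fun p => 2 * Real.sqrt (a p.2) * ∑ i : Fin 2, ∑ c, A ((p.1, i), p.2) c * B (p.1, i) c
    with hcz
  set Z : Ω → ℝ := fun ω => ∑ p : Fin M × Fin K, cz p * U ω p.1 p.2 with hZ
  set cB : ℝ := ∑ r, ∑ c, (B r c) ^ 2 with hcB
  set D : ℝ := ∑ r, ∑ c, ∑ k, a k * (Ai (r, k) c) ^ 2 with hD
  set czsq : ℝ := ∑ p : Fin M × Fin K, (cz p) ^ 2 with hczsq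
  -- Step 1 : trace identity
  have hN : ∀ ω r c, (Q ω * A + B) r c = v r c ω + B r c := by
    intro ω r c
    simp only [Matrix.add_apply, Matrix.mul_apply, hv]
    congr 1
    rw [Fintype.sum_prod_type, Finset.sum_comm]
    refine Finset.sum_congr rfl fun k _ => ?_
    simp only [hQ, ite_mul, zero_mul]
    rw [Finset.sum_ite_eq' Finset.univ r
      (fun r' => Real.sqrt (a k) * U ω r'.1 k * A (r', k) c)]
    simp
  have hZZ : ∀ ω, (∑ r : Fin M × Fin 2, ∑ c, 2 * v r c ω * B r c) = Z ω := by
    intro ω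
    have hper : ∀ (r : Fin M × Fin 2) c, 2 * v r c ω * B r c
        = ∑ k, 2 * (Real.sqrt (a k) * U ω r.1 k * A (r, k) c) * B r c := by
      intro r c
      simp only [hv]
      rw [Finset.mul_sum, Finset.sum_mul]
    calc (∑ r : Fin M × Fin 2, ∑ c, 2 * v r c ω * B r c)
        = ∑ r : Fin M × Fin 2, ∑ c, ∑ k,
            2 * (Real.sqrt (a k) * U ω r.1 k * A (r, k) c) * B r c :=
          Finset.sum_congr rfl fun r _ => Finset.sum_congr rfl fun c _ => hper r c
      _ = ∑ r : Fin M × Fin 2, ∑ k, ∑ c,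
            2 * (Real.sqrt (a k) * U ω r.1 k * A (r, k) c) * B r c :=
          Finset.sum_congr rfl fun r _ => Finset.sum_comm
      _ = ∑ m, ∑ i, ∑ k, ∑ c,
            2 * (Real.sqrt (a k) * U ω m k * A ((m, i), k) c) * B (m, i) c := by
          rw [Fintype.sum_prod_type]
      _ = ∑ m, ∑ k, ∑ i, ∑ c,
            2 * (Real.sqrt (a k) * U ω m k * A ((m, i), k) c) * B (m, i) c :=
          Finset.sum_congr rfl fun m _ => Finset.sum_comm
      _ = Z ω := by
          simp only [hZ, hcz, Fintype.sum_prod_type]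
          refine Finset.sum_congr rfl fun m _ => Finset.sum_congr rfl fun k _ => ?_
          simp only [Finset.mul_sum, Finset.sum_mul]
          exact Finset.sum_congr rfl fun i _ => Finset.sum_congr rfl fun c _ => by ring
  have hX : ∀ ω, Matrix.trace ((Q ω * A + B).transpose * (Q ω * A + B))
      = S1 ω + Z ω + cB := by
    intro ω
    have htr : Matrix.trace ((Q ω * A + B).transpose * (Q ω * A + B))
        = ∑ c, ∑ r, ((Q ω * A + B) r c) ^ 2 := by
      simp only [Matrix.trace, Matrix.diag, Matrix.mul_apply, Matrix.transpose_apply, sq]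
    rw [htr]
    calc (∑ c, ∑ r, ((Q ω * A + B) r c) ^ 2)
        = ∑ c, ∑ r, ((v r c ω) ^ 2 + 2 * v r c ω * B r c + (B r c) ^ 2) :=
          Finset.sum_congr rfl fun c _ => Finset.sum_congr rfl fun r _ => by rw [hN]; ring
      _ = (∑ c, ∑ r, (v r c ω) ^ 2) + (∑ c, ∑ r, 2 * v r c ω * B r c)
            + (∑ c, ∑ r, (B r c) ^ 2) := by
          simp [Finset.sum_add_distrib]
      _ = S1 ω + Z ω + cB := by
          rw [Finset.sum_comm (f := fun c r => (v r c ω) ^ 2),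
            Finset.sum_comm (f := fun c r => 2 * v r c ω * B r c),
            Finset.sum_comm (f := fun c r => (B r c) ^ 2), hZZ]
  -- Step 2 : a.e. event
  have hT : ∀ᵐ ω, ∀ m k, U ω m k = 1 ∨ U ω m k = -1 := by
    rw [ae_all_iff]
    intro m
    rw [ae_all_iff]
    intro k
    exact pm_union_ae (hUmeas m k) (hUdist m k).1 (hUdist m k).2
  -- Step 3 : measurability
  have hS1meas : Measurable S1 := by
    rw [hS1]
    apply Finset.measurable_sum
    intro r _
    apply Finset.measurable_sum
    intro c _
    apply Measurable.pow_const
    rw [hv]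
    apply Finset.measurable_sum
    intro k _
    exact ((hUmeas r.1 k).const_mul _).mul_const _
  have hZmeas : Measurable Z := by
    rw [hZ]
    apply Finset.measurable_sum
    intro p _
    exact (hUmeas p.1 p.2).const_mul _
  -- Step 4 : concentration of S1 around D
  have hS1bd : ∀ᵐ ω, |S1 ω - D| ≤ 2 * M * (ΔfP * op) := by
    filter_upwards [hT] with ω hU1
    have hU2 : ∀ m k, (U ω m k) ^ 2 = 1 := fun m k => by
      rcases hU1 m k with h | h <;> rw [h] <;> norm_num
    have hper : ∀ r : Fin M × Fin 2,
        |(∑ c, (v r c ω) ^ 2) - (∑ c, ∑ k, a k * (Ai (r, k) c) ^ 2)| ≤ ΔfP * op := by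
      intro r
      set y : (Fin M × Fin 2) × Fin K → ℝ :=
        fun j => if j.1 = r then Real.sqrt (a j.2) * U ω r.1 j.2 else 0 with hy
      have hyA : ∀ c, (∑ j, y j * A j c) = v r c ω := by
        intro c
        simp only [hy, hv]
        rw [Fintype.sum_prod_type, Finset.sum_comm]
        refine Finset.sum_congr rfl fun k _ => ?_
        simp only [ite_mul, zero_mul]
        rw [Finset.sum_ite_eq' Finset.univ r
          (fun r' => Real.sqrt (a k) * U ω r.1 k * A (r', k) c)]
        simp
      have hyAi : ∀ c, (∑ j, y j * Ai j c)
          = ∑ k, Real.sqrt (a k) * U ω r.1 k * Ai (r, k) c := by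
        intro c
        simp only [hy]
        rw [Fintype.sum_prod_type, Finset.sum_comm]
        refine Finset.sum_congr rfl fun k _ => ?_
        simp only [ite_mul, zero_mul]
        rw [Finset.sum_ite_eq' Finset.univ r
          (fun r' => Real.sqrt (a k) * U ω r.1 k * Ai (r', k) c)]
        simp
      have hysq : (∑ j, (y j) ^ 2) = ∑ k, a k := by
        simp only [hy]
        rw [Fintype.sum_prod_type, Finset.sum_comm]
        refine Finset.sum_congr rfl fun k _ => ?_
        simp only [apply_ite (fun x : ℝ => x ^ 2), zero_pow (by norm_num : (2:ℕ) ≠ 0)]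
        rw [Finset.sum_ite_eq' Finset.univ r
          (fun _ => (Real.sqrt (a k) * U ω r.1 k) ^ 2)]
        simp only [Finset.mem_univ, if_true]
        rw [mul_pow, hU2, Real.sq_sqrt (ha k).1, mul_one]
      have hAisq : ∀ c, (∑ k, Real.sqrt (a k) * U ω r.1 k * Ai (r, k) c) ^ 2
          = ∑ k, a k * (Ai (r, k) c) ^ 2 := by
        intro c
        rw [sq_sum_of_unique]
        · refine Finset.sum_congr rfl fun k _ => ?_
          rw [mul_pow, mul_pow, hU2, Real.sq_sqrt (ha k).1]
          ring
        · intro k₁ k₂ h1 h2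
          refine hAi r c k₁ k₂ ?_ ?_
          · intro hz; apply h1; rw [hz]; ring
          · intro hz; apply h2; rw [hz]; ring
      have hqd := quad_diff A Ai y
      rw [← hW] at hqd
      have e1 : (∑ c, (∑ j, y j * A j c) ^ 2) = ∑ c, (v r c ω) ^ 2 :=
        Finset.sum_congr rfl fun c _ => by rw [hyA]
      have e2 : (∑ c, (∑ j, y j * Ai j c) ^ 2) = ∑ c, ∑ k, a k * (Ai (r, k) c) ^ 2 :=
        Finset.sum_congr rfl fun c _ => by rw [hyAi, hAisq]
      rw [e1, e2] at hqd
      rw [hqd]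
      calc |∑ j, y j * W.mulVec y j| ≤ op * ∑ j, (y j) ^ 2 := abs_quad_le W y
        _ = op * ∑ k, a k := by rw [hysq]
        _ ≤ op * ΔfP := mul_le_mul_of_nonneg_left hsum hop0
        _ = ΔfP * op := mul_comm _ _
    have hsplit : S1 ω - D = ∑ r : Fin M × Fin 2,
        ((∑ c, (v r c ω) ^ 2) - (∑ c, ∑ k, a k * (Ai (r, k) c) ^ 2)) := by
      rw [Finset.sum_sub_distrib]
    rw [hsplit]
    calc |∑ r : Fin M × Fin 2,
          ((∑ c, (v r c ω) ^ 2) - (∑ c, ∑ k, a k * (Ai (r, k) c) ^ 2))|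
        ≤ ∑ r : Fin M × Fin 2,
            |(∑ c, (v r c ω) ^ 2) - (∑ c, ∑ k, a k * (Ai (r, k) c) ^ 2)| :=
          Finset.abs_sum_le_sum_abs _ _
      _ ≤ ∑ _r : Fin M × Fin 2, (ΔfP * op) := Finset.sum_le_sum fun r _ => hper r
      _ = (Fintype.card (Fin M × Fin 2) : ℝ) * (ΔfP * op) := by
          rw [Finset.sum_const, nsmul_eq_mul, Finset.card_univ]
      _ = 2 * M * (ΔfP * op) := by
          rw [Fintype.card_prod, Fintype.card_fin, Fintype.card_fin]
          push_cast
          ring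
  -- Step 5 : integrability
  have hS1int : Integrable S1 := by
    refine Integrable.mono' (integrable_const (|D| + 2 * M * (ΔfP * op)))
      hS1meas.aestronglyMeasurable ?_
    filter_upwards [hS1bd] with ω h
    rw [Real.norm_eq_abs]
    calc |S1 ω| = |(S1 ω - D) + D| := by ring_nf
      _ ≤ |S1 ω - D| + |D| := abs_add_le _ _
      _ ≤ |D| + 2 * M * (ΔfP * op) := by linarith
  have hUint : ∀ m k, Integrable (fun ω => U ω m k) := by
    intro m k
    refine Integrable.mono' (integrable_const 1) (hUmeas m k).aestronglyMeasurable ?_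
    filter_upwards [pm_union_ae (hUmeas m k) (hUdist m k).1 (hUdist m k).2] with ω h
    rcases h with h | h <;> rw [Real.norm_eq_abs, h] <;> norm_num
  have hZint : Integrable Z := by
    rw [hZ]
    apply integrable_finset_sum
    intro p _
    exact (hUint p.1 p.2).const_mul _
  -- Step 6 : means
  have hEU : ∀ m k, (∫ ω, U ω m k) = 0 := by
    intro m k
    have := integral_pm (hUmeas m k) (hUdist m k).1 (hUdist m k).2 (fun x => x)
    simpa using this
  have hEZ : (∫ ω, Z ω) = 0 := by
    rw [hZ]
    rw [integral_finset_sum _ (fun p _ => (hUint p.1 p.2).const_mul _)]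
    refine Finset.sum_eq_zero fun p _ => ?_
    rw [integral_const_mul, hEU]
    ring
  -- Step 7 : Z is sub-Gaussian with parameter czsq
  have hZmgf : ∀ t : ℝ, (∫ ω, Real.exp (t * Z ω)) ≤ Real.exp (t ^ 2 * czsq / 2) := by
    intro t
    have hgind : iIndepFun
        (fun (p : Fin M × Fin K) ω => cz p * U ω p.1 p.2) volume :=
      hUindep.comp (fun p x => cz p * x) (fun p => measurable_id.const_mul _)
    have hgmeas : ∀ p : Fin M × Fin K, Measurable fun ω => cz p * U ω p.1 p.2 :=
      fun p => (hUmeas p.1 p.2).const_mul _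
    have hZfun : Z = ∑ p : Fin M × Fin K, (fun ω => cz p * U ω p.1 p.2) := by
      funext ω
      rw [hZ, Finset.sum_apply]
    have hmgf : mgf Z volume t
        = ∏ p : Fin M × Fin K, mgf (fun ω => cz p * U ω p.1 p.2) volume t := by
      rw [hZfun]
      exact hgind.mgf_sum hgmeas Finset.univ
    have hfac : ∀ p : Fin M × Fin K,
        mgf (fun ω => cz p * U ω p.1 p.2) volume t = Real.cosh (t * cz p) := by
      intro p
      have h := integral_pm (hUmeas p.1 p.2) (hUdist p.1 p.2).1 (hUdist p.1 p.2).2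
        (fun x => Real.exp (t * (cz p * x)))
      simp only [mul_one, mul_neg_one, mul_neg] at h
      rw [mgf, Real.cosh_eq]
      exact h
    calc (∫ ω, Real.exp (t * Z ω)) = mgf Z volume t := rfl
      _ = ∏ p : Fin M × Fin K, Real.cosh (t * cz p) := by
          rw [hmgf]
          exact Finset.prod_congr rfl fun p _ => hfac p
      _ ≤ ∏ p : Fin M × Fin K, Real.exp ((t * cz p) ^ 2 / 2) :=
          Finset.prod_le_prod (fun p _ => (Real.cosh_pos _).le)
            (fun p _ => Real.cosh_le_exp_half_sq _)
      _ = Real.exp (∑ p : Fin M × Fin K, (t * cz p) ^ 2 / 2) := (Real.exp_sum _ _).symm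
      _ = Real.exp (t ^ 2 * czsq / 2) := by
          congr 1
          rw [hczsq, ← Finset.sum_div]
          congr 1
          rw [Finset.mul_sum]
          exact Finset.sum_congr rfl fun p _ => by ring
  -- Step 8 : czsq bound
  have hczbd : czsq ≤ (2 * Real.sqrt (2 * P) * F) ^ 2 := by
    have hs2 : (2 * Real.sqrt (2 * P) * F) ^ 2 = 8 * P * F ^ 2 := by
      rw [mul_pow, mul_pow, Real.sq_sqrt (by positivity : (0:ℝ) ≤ 2 * P)]
      ring
    have hF2 : F ^ 2 = ∑ j, ∑ r', ((A * B.transpose) j r') ^ 2 := by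
      rw [hFdef]
      unfold frobNorm
      exact Real.sq_sqrt
        (Finset.sum_nonneg fun j _ => Finset.sum_nonneg fun r' _ => sq_nonneg _)
    have hper : ∀ p : Fin M × Fin K, (cz p) ^ 2
        ≤ 8 * P * ∑ i : Fin 2, ((A * B.transpose) ((p.1, i), p.2) (p.1, i)) ^ 2 := by
      intro p
      have he : ∀ i : Fin 2, (∑ c, A ((p.1, i), p.2) c * B (p.1, i) c)
          = (A * B.transpose) ((p.1, i), p.2) (p.1, i) := by
        intro i
        rw [Matrix.mul_apply]
        exact Finset.sum_congr rfl fun c _ => by rw [Matrix.transpose_apply]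
      have hczp : cz p = 2 * Real.sqrt (a p.2)
          * ∑ i : Fin 2, (A * B.transpose) ((p.1, i), p.2) (p.1, i) := by
        rw [hcz]
        refine congrArg (fun s => 2 * Real.sqrt (a p.2) * s) ?_
        exact Finset.sum_congr rfl fun i _ => he i
      rw [hczp, Fin.sum_univ_two, Fin.sum_univ_two]
      have hsq : (Real.sqrt (a p.2)) ^ 2 = a p.2 := Real.sq_sqrt (ha p.2).1
      have haP : a p.2 ≤ P := (ha p.2).2
      have ha0 : 0 ≤ a p.2 := (ha p.2).1
      set e0 := (A * B.transpose) ((p.1, 0), p.2) (p.1, 0)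
      set e1 := (A * B.transpose) ((p.1, 1), p.2) (p.1, 1)
      nlinarith [sq_nonneg (e0 - e1), sq_nonneg (e0 + e1), Real.sqrt_nonneg (a p.2),
        sq_nonneg (Real.sqrt (a p.2) * (e0 + e1))]
    have hsum' : (∑ p : Fin M × Fin K, ∑ i : Fin 2,
          ((A * B.transpose) ((p.1, i), p.2) (p.1, i)) ^ 2)
        ≤ ∑ j, ∑ r', ((A * B.transpose) j r') ^ 2 := by
      have hre : (∑ p : Fin M × Fin K, ∑ i : Fin 2,
            ((A * B.transpose) ((p.1, i), p.2) (p.1, i)) ^ 2)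
          = ∑ j : (Fin M × Fin 2) × Fin K, ((A * B.transpose) j j.1) ^ 2 := by
        rw [Fintype.sum_prod_type]
        conv_rhs => rw [Fintype.sum_prod_type, Fintype.sum_prod_type]
        refine Finset.sum_congr rfl fun m _ => ?_
        exact Finset.sum_comm
      rw [hre]
      refine Finset.sum_le_sum fun j _ => ?_
      exact Finset.single_le_sum (f := fun r' => ((A * B.transpose) j r') ^ 2)
        (fun r' _ => sq_nonneg _) (Finset.mem_univ j.1)
    calc czsq = ∑ p : Fin M × Fin K, (cz p) ^ 2 := hczsq
      _ ≤ ∑ p : Fin M × Fin K, (8 * P * ∑ i : Fin 2,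
            ((A * B.transpose) ((p.1, i), p.2) (p.1, i)) ^ 2) :=
          Finset.sum_le_sum fun p _ => hper p
      _ = 8 * P * ∑ p : Fin M × Fin K, ∑ i : Fin 2,
            ((A * B.transpose) ((p.1, i), p.2) (p.1, i)) ^ 2 := by
          rw [Finset.mul_sum]
      _ ≤ 8 * P * ∑ j, ∑ r', ((A * B.transpose) j r') ^ 2 := by
          apply mul_le_mul_of_nonneg_left hsum' (by positivity)
      _ = (2 * Real.sqrt (2 * P) * F) ^ 2 := by rw [hs2, hF2]
  -- Final assembly
  have hfun : (fun ω => Matrix.trace ((Q ω * A + B).transpose * (Q ω * A + B)))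
      = fun ω => S1 ω + Z ω + cB := funext hX
  rw [hfun]
  have hEX : (∫ ω, (S1 ω + Z ω + cB)) = (∫ ω, S1 ω) + cB := by
    have h1 : Integrable (fun ω => S1 ω + Z ω) := hS1int.add hZint
    rw [integral_add h1 (integrable_const cB), integral_add hS1int hZint, hEZ,
      integral_const]
    simp
  set ES1 : ℝ := ∫ ω, S1 ω with hES1
  set Y : Ω → ℝ := fun ω => S1 ω - ES1 with hYdef
  have hYmeas : Measurable Y := hS1meas.sub measurable_const
  have hES1D : |ES1 - D| ≤ 2 * M * (ΔfP * op) := by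
    have h1 : ES1 - D = ∫ ω, (S1 ω - D) := by
      rw [integral_sub hS1int (integrable_const D), integral_const]
      simp [hES1]
    rw [h1]
    have h2 : ∀ᵐ ω, ‖S1 ω - D‖ ≤ 2 * M * (ΔfP * op) := by
      filter_upwards [hS1bd] with ω h
      rwa [Real.norm_eq_abs]
    have h3 := norm_integral_le_of_norm_le_const h2
    rw [Real.norm_eq_abs] at h3
    simpa using h3
  have hYbd : ∀ᵐ ω, |Y ω| ≤ 4 * M * (ΔfP * op) := by
    filter_upwards [hS1bd] with ω h
    have : |Y ω| = |(S1 ω - D) + (D - ES1)| := by rw [hYdef]; ring_nf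
    rw [this]
    calc |(S1 ω - D) + (D - ES1)| ≤ |S1 ω - D| + |D - ES1| := abs_add_le _ _
      _ ≤ 2 * M * (ΔfP * op) + 2 * M * (ΔfP * op) := by
          refine add_le_add h ?_
          rw [abs_sub_comm]
          exact hES1D
      _ = 4 * M * (ΔfP * op) := by ring
  have hEY : (∫ ω, Y ω) = 0 := by
    simp only [hYdef]
    rw [integral_sub hS1int (integrable_const ES1), integral_const]
    simp [hES1]
  refine le_of_forall_pos_le_add fun ε hε => ?_
  set s1 : ℝ := 4 * (M : ℝ) * ΔfP * op with hs1def
  set s2 : ℝ := 2 * Real.sqrt (2 * P) * F with hs2def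
  have hs10 : 0 ≤ s1 := by
    have : (0:ℝ) ≤ 4 * (M : ℝ) * ΔfP := by positivity
    exact mul_nonneg this hop0
  have hs20 : 0 ≤ s2 := mul_nonneg (by positivity) hF0
  set C1 : ℝ := s1 + ε / 2 with hC1def
  set C2 : ℝ := s2 + ε / 2 with hC2def
  have hC1pos : 0 < C1 := by rw [hC1def]; linarith
  have hC2pos : 0 < C2 := by rw [hC2def]; linarith
  set tt : ℝ := s1 + s2 + ε with httdef
  have httC : tt = C1 + C2 := by rw [httdef, hC1def, hC2def]; ring
  have httpos : 0 < tt := by rw [httC]; linarith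
  unfold subGaussianNorm
  apply csInf_le ⟨0, fun x hx => le_of_lt hx.1⟩
  refine ⟨httpos, fun l => ?_⟩
  have hint_eq : (fun ω => Real.exp (l * ((S1 ω + Z ω + cB) - ∫ ω', (S1 ω' + Z ω' + cB))))
      = fun ω => Real.exp (l * Y ω) * Real.exp (l * Z ω) := by
    funext ω
    rw [hEX, ← Real.exp_add]
    congr 1
    rw [hYdef]
    ring
  rw [hint_eq]
  set p : ℝ := tt / C1 with hpdef
  set q : ℝ := tt / C2 with hqdef
  have hppos : 0 < p := div_pos httpos hC1pos
  have hqpos : 0 < q := div_pos httpos hC2pos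
  have hpq : Real.HolderConjugate p q := by
    rw [Real.holderConjugate_iff]
    constructor
    · rw [hpdef]
      rw [lt_div_iff₀ hC1pos]
      rw [httC]
      linarith
    · rw [hpdef, hqdef, inv_div, inv_div, ← add_div, ← httC,
        div_self httpos.ne']
  have hYbd' : ∀ᵐ ω, |Y ω| ≤ C1 := by
    filter_upwards [hYbd] with ω h
    have he : 4 * (M:ℝ) * (ΔfP * op) = s1 := by rw [hs1def]; ring
    rw [hC1def]
    linarith
  have hZbd : ∀ᵐ ω, |Z ω| ≤ ∑ p' : Fin M × Fin K, |cz p'| := by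
    filter_upwards [hT] with ω h
    simp only [hZ]
    calc |∑ p' : Fin M × Fin K, cz p' * U ω p'.1 p'.2|
        ≤ ∑ p' : Fin M × Fin K, |cz p' * U ω p'.1 p'.2| := Finset.abs_sum_le_sum_abs _ _
      _ = ∑ p' : Fin M × Fin K, |cz p'| := by
          refine Finset.sum_congr rfl fun p' _ => ?_
          rw [abs_mul]
          rcases h p'.1 p'.2 with h1 | h1 <;> rw [h1] <;> simp
  have hfmeas : AEStronglyMeasurable (fun ω => Real.exp (l * Y ω)) volume :=
    ((hYmeas.const_mul l).exp).aestronglyMeasurable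
  have hgmeas2 : AEStronglyMeasurable (fun ω => Real.exp (l * Z ω)) volume :=
    ((hZmeas.const_mul l).exp).aestronglyMeasurable
  have hfLp : MemLp (fun ω => Real.exp (l * Y ω)) (ENNReal.ofReal p) volume := by
    refine MemLp.of_bound hfmeas (Real.exp (|l| * C1)) ?_
    filter_upwards [hYbd'] with ω h
    rw [Real.norm_eq_abs, Real.abs_exp, Real.exp_le_exp]
    calc l * Y ω ≤ |l * Y ω| := le_abs_self _
      _ = |l| * |Y ω| := abs_mul _ _
      _ ≤ |l| * C1 := mul_le_mul_of_nonneg_left h (abs_nonneg l)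
  have hgLp : MemLp (fun ω => Real.exp (l * Z ω)) (ENNReal.ofReal q) volume := by
    refine MemLp.of_bound hgmeas2 (Real.exp (|l| * ∑ p' : Fin M × Fin K, |cz p'|)) ?_
    filter_upwards [hZbd] with ω h
    rw [Real.norm_eq_abs, Real.abs_exp, Real.exp_le_exp]
    calc l * Z ω ≤ |l * Z ω| := le_abs_self _
      _ = |l| * |Z ω| := abs_mul _ _
      _ ≤ |l| * ∑ p' : Fin M × Fin K, |cz p'| := mul_le_mul_of_nonneg_left h (abs_nonneg l)
  have hH := integral_mul_le_Lp_mul_Lq_of_nonneg hpq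
    (Filter.Eventually.of_forall fun ω => (Real.exp_pos (l * Y ω)).le)
    (Filter.Eventually.of_forall fun ω => (Real.exp_pos (l * Z ω)).le) hfLp hgLp
  -- bound the two factors
  have hfp_eq : (fun ω => Real.exp (l * Y ω) ^ p) = fun ω => Real.exp ((p * l) * Y ω) := by
    funext ω
    rw [← Real.exp_mul]
    congr 1
    ring
  have hgq_eq : (fun ω => Real.exp (l * Z ω) ^ q) = fun ω => Real.exp ((q * l) * Z ω) := by
    funext ω
    rw [← Real.exp_mul]
    congr 1
    ring
  have hf_bound : (∫ ω, Real.exp (l * Y ω) ^ p) ≤ Real.exp ((p * l) ^ 2 * C1 ^ 2 / 2) := by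
    rw [hfp_eq]
    exact hoeffding_sym hYmeas hC1pos hYbd' hEY (p * l)
  have hg_bound : (∫ ω, Real.exp (l * Z ω) ^ q) ≤ Real.exp ((q * l) ^ 2 * C2 ^ 2 / 2) := by
    rw [hgq_eq]
    refine (hZmgf (q * l)).trans (Real.exp_le_exp.2 ?_)
    have hcz2 : czsq ≤ C2 ^ 2 := by
      refine hczbd.trans ?_
      have hle : s2 ≤ C2 := by rw [hC2def]; linarith
      exact pow_le_pow_left₀ hs20 hle 2
    gcongr
  have hf_int_nonneg : 0 ≤ ∫ ω, Real.exp (l * Y ω) ^ p := by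
    rw [hfp_eq]
    exact integral_nonneg fun ω => (Real.exp_pos _).le
  have hg_int_nonneg : 0 ≤ ∫ ω, Real.exp (l * Z ω) ^ q := by
    rw [hgq_eq]
    exact integral_nonneg fun ω => (Real.exp_pos _).le
  have hf_rpow : (∫ ω, Real.exp (l * Y ω) ^ p) ^ (1 / p)
      ≤ Real.exp ((p * l) ^ 2 * C1 ^ 2 / 2 * (1 / p)) := by
    rw [Real.exp_mul]
    exact Real.rpow_le_rpow hf_int_nonneg hf_bound (by positivity)
  have hg_rpow : (∫ ω, Real.exp (l * Z ω) ^ q) ^ (1 / q)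
      ≤ Real.exp ((q * l) ^ 2 * C2 ^ 2 / 2 * (1 / q)) := by
    rw [Real.exp_mul]
    exact Real.rpow_le_rpow hg_int_nonneg hg_bound (by positivity)
  have hexp_eq : (p * l) ^ 2 * C1 ^ 2 / 2 * (1 / p) + (q * l) ^ 2 * C2 ^ 2 / 2 * (1 / q)
      = l ^ 2 * tt ^ 2 / 2 := by
    rw [hpdef, hqdef, httC]
    field_simp
  calc (∫ ω, Real.exp (l * Y ω) * Real.exp (l * Z ω))
      ≤ (∫ ω, Real.exp (l * Y ω) ^ p) ^ (1 / p) * (∫ ω, Real.exp (l * Z ω) ^ q) ^ (1 / q) :=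
        hH
    _ ≤ Real.exp ((p * l) ^ 2 * C1 ^ 2 / 2 * (1 / p))
          * Real.exp ((q * l) ^ 2 * C2 ^ 2 / 2 * (1 / q)) := by
        refine mul_le_mul hf_rpow hg_rpow ?_ (Real.exp_nonneg _)
        exact Real.rpow_nonneg hg_int_nonneg _
    _ = Real.exp ((p * l) ^ 2 * C1 ^ 2 / 2 * (1 / p) + (q * l) ^ 2 * C2 ^ 2 / 2 * (1 / q)) :=
        (Real.exp_add _ _).symm
    _ = Real.exp (l ^ 2 * tt ^ 2 / 2) := by rw [hexp_eq]
end

section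
/- Let X be a real random variable with E X = 0 and finite sub-exponential norm ‖X‖_se. Then for every λ ∈ ℝ with |λ|·‖X‖_se < 1: E exp(λX) ≤ 1 + λ²·‖X‖_se² / (1 − |λ|·‖X‖_se). -/
open MeasureTheory ProbabilityTheory Real

/-- The sub-exponential norm of a real random variable:
`‖X‖_se := sup_{k ≥ 1} (E|X|^k / k!)^{1/k}`. -/
noncomputable def subExpNorm {Ω : Type*} [MeasureSpace Ω] (X : Ω → ℝ) : ℝ :=
  ⨆ k : {k : ℕ // 1 ≤ k}, ((∫ ω, |X ω| ^ (k : ℕ)) / (Nat.factorial k)) ^ (((k : ℕ) : ℝ)⁻¹)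

/-- If `X` is centered with finite sub-exponential norm, then for every `λ` with
`|λ|·‖X‖_se < 1` we have `E exp(λX) ≤ 1 + λ²‖X‖_se²/(1 − |λ|‖X‖_se)`. -/
theorem mgf_le_of_subExp
    {Ω : Type*} [MeasureSpace Ω] [IsProbabilityMeasure (volume : Measure Ω)]
    (X : Ω → ℝ) (hXmeas : Measurable X)
    (hXcent : (∫ ω, X ω) = 0)
    -- finiteness of the sub-exponential norm: all absolute moments exist and
    -- the defining family is bounded above
    (hXint : ∀ k : ℕ, 1 ≤ k → Integrable (fun ω => |X ω| ^ k))
    (hXbdd : BddAbove (Set.range fun k : {k : ℕ // 1 ≤ k} =>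
      ((∫ ω, |X ω| ^ (k : ℕ)) / (Nat.factorial k)) ^ (((k : ℕ) : ℝ)⁻¹)))
    (l : ℝ) (hl : |l| * subExpNorm X < 1) :
    (∫ ω, Real.exp (l * X ω)) ≤
      1 + l ^ 2 * subExpNorm X ^ 2 / (1 - |l| * subExpNorm X) := by
  set K := subExpNorm X with hKdef
  have hK0 : 0 ≤ K := by
    have h1 := le_ciSup hXbdd (⟨1, le_refl 1⟩ : {k : ℕ // 1 ≤ k})
    refine le_trans ?_ h1
    exact Real.rpow_nonneg
      (div_nonneg (integral_nonneg fun ω => by positivity) (by positivity)) _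
  set r := |l| * K with hrdef
  have hr0 : 0 ≤ r := mul_nonneg (abs_nonneg l) hK0
  have hr1 : r < 1 := hl
  -- moment bound
  have hmom : ∀ k : ℕ, 1 ≤ k → (∫ ω, |X ω| ^ k) ≤ K ^ k * k.factorial := by
    intro k hk
    have ha0 : 0 ≤ (∫ ω, |X ω| ^ k) / k.factorial :=
      div_nonneg (integral_nonneg fun ω => by positivity) (by positivity)
    have hle : ((∫ ω, |X ω| ^ k) / (k.factorial : ℝ)) ^ ((k : ℝ)⁻¹) ≤ K :=
      le_ciSup hXbdd (⟨k, hk⟩ : {k : ℕ // 1 ≤ k})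
    have hpow := pow_le_pow_left₀ (Real.rpow_nonneg ha0 _) hle k
    rw [Real.rpow_inv_natCast_pow ha0 (by omega)] at hpow
    have hfac : (0:ℝ) < k.factorial := by positivity
    calc (∫ ω, |X ω| ^ k) = ((∫ ω, |X ω| ^ k) / k.factorial) * k.factorial := by
          field_simp
      _ ≤ K ^ k * k.factorial := by
          exact mul_le_mul_of_nonneg_right hpow hfac.le
  -- the terms
  set F : ℕ → Ω → ℝ := fun k ω => (l * X ω) ^ k / k.factorial with hF
  have hFint : ∀ k, Integrable (F k) := by
    intro k
    rcases Nat.eq_zero_or_pos k with h0 | hk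
    · subst h0; simpa [hF] using (integrable_const (1 : ℝ))
    · have hint : Integrable (fun ω => |l| ^ k / k.factorial * |X ω| ^ k) :=
        (hXint k hk).const_mul _
      refine hint.mono' ?_ ?_
      · exact (((hXmeas.const_mul l).pow_const k).div_const _).aestronglyMeasurable
      · filter_upwards with ω
        rw [Real.norm_eq_abs, hF]
        simp only [abs_div, abs_pow, abs_mul, Nat.abs_cast]
        rw [div_eq_mul_inv, div_mul_eq_mul_div, div_eq_mul_inv, mul_comm (|l|^k)]
        ring_nf
        exact le_refl _
  -- norm integral bound
  have hnorm : ∀ k, (∫ ω, ‖F k ω‖) ≤ r ^ k := by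
    intro k
    rcases Nat.eq_zero_or_pos k with h0 | hk
    · subst h0; simp [hF]
    · have heq : (fun ω => ‖F k ω‖) = fun ω => |l| ^ k / k.factorial * |X ω| ^ k := by
        funext ω
        rw [Real.norm_eq_abs, hF]
        simp only [abs_div, abs_pow, abs_mul, Nat.abs_cast]
        ring
      rw [heq, integral_const_mul]
      have := hmom k hk
      have hfac : (0:ℝ) < k.factorial := by positivity
      calc |l| ^ k / k.factorial * ∫ ω, |X ω| ^ k
          ≤ |l| ^ k / k.factorial * (K ^ k * k.factorial) := by
            exact mul_le_mul_of_nonneg_left this (by positivity)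
        _ = (|l| * K) ^ k := by field_simp [mul_pow]; ring
  have hnormnn : ∀ k, 0 ≤ (∫ ω, ‖F k ω‖) := fun k =>
    integral_nonneg fun ω => norm_nonneg _
  have hsumnorm : Summable fun k => ∫ ω, ‖F k ω‖ :=
    Summable.of_nonneg_of_le hnormnn hnorm (summable_geometric_of_lt_one hr0 hr1)
  have hhs : HasSum (fun k => ∫ ω, F k ω) (∫ ω, ∑' k, F k ω) :=
    hasSum_integral_of_summable_integral_norm hFint hsumnorm
  have hexp : ∀ ω, ∑' k, F k ω = Real.exp (l * X ω) := by
    intro ω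
    rw [Real.exp_eq_exp_ℝ, NormedSpace.exp_eq_tsum_div]
  have hintexp : (∫ ω, Real.exp (l * X ω)) = ∑' k, ∫ ω, F k ω := by
    have he : (∫ ω, Real.exp (l * X ω)) = ∫ ω, ∑' k, F k ω :=
      integral_congr_ae (Filter.Eventually.of_forall fun ω => (hexp ω).symm)
    exact he.trans hhs.tsum_eq.symm
  set t : ℕ → ℝ := fun k => ∫ ω, F k ω with ht
  have hsumt : Summable t :=
    hsumnorm.of_norm_bounded fun k => norm_integral_le_integral_norm _
  have ht0 : t 0 = 1 := by simp [ht, hF]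
  have ht1 : t 1 = 0 := by
    simp only [ht, hF, pow_one, Nat.factorial_one, Nat.cast_one, div_one]
    rw [integral_const_mul, hXcent, mul_zero]
  have htle : ∀ k, t (k + 2) ≤ r ^ (k + 2) := by
    intro k
    calc t (k + 2) ≤ |t (k + 2)| := le_abs_self _
      _ ≤ ∫ ω, ‖F (k + 2) ω‖ := by
          rw [← Real.norm_eq_abs]; exact norm_integral_le_integral_norm _
      _ ≤ r ^ (k + 2) := hnorm _
  have hgeo : Summable fun k : ℕ => r ^ (k + 2) :=
    ((summable_geometric_of_lt_one hr0 hr1).mul_right (r ^ 2)).congr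
      (by intro k; rw [pow_add])
  have htail : ∑' k, t (k + 2) ≤ r ^ 2 * (1 - r)⁻¹ := by
    have h1 : ∑' k, t (k + 2) ≤ ∑' k : ℕ, r ^ (k + 2) := by
      refine Summable.tsum_le_tsum htle ?_ hgeo
      exact (summable_nat_add_iff 2).2 hsumt
    have h2 : ∑' k : ℕ, r ^ (k + 2) = r ^ 2 * (1 - r)⁻¹ := by
      have : ∀ k : ℕ, r ^ (k + 2) = r ^ k * r ^ 2 := fun k => pow_add r k 2
      rw [tsum_congr this, tsum_mul_right, tsum_geometric_of_lt_one hr0 hr1]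
      ring
    linarith
  have hsplit : ∑' k, t k = t 0 + (t 1 + ∑' k, t (k + 2)) := by
    rw [Summable.tsum_eq_zero_add hsumt, Summable.tsum_eq_zero_add ((summable_nat_add_iff 1).2 hsumt)]
  have hr2 : r ^ 2 = l ^ 2 * K ^ 2 := by
    rw [hrdef, mul_pow, sq_abs]
  rw [hintexp, hsplit, ht0, ht1, div_eq_mul_inv]
  rw [hr2] at htail
  linarith
end

section
/- Let X be a real random variable with E X = 0 and finite sub-exponential norm ‖X‖_se > 0. Then for every c ∈ (0,1) and every λ ∈ (−c/‖X‖_se, c/‖X‖_se): E exp(λX) ≤ exp((λ²/2)·(2·‖X‖_se²/(1 − c))). -/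
open MeasureTheory ProbabilityTheory Real

lemma exp_sub_le_tail (t : ℝ) :
    Real.exp t - 1 - t ≤ ∑' k : ℕ, |t| ^ (k + 2) / (Nat.factorial (k + 2)) := by
  have hsum : Summable (fun n : ℕ => |t| ^ n / Nat.factorial n) :=
    Real.summable_pow_div_factorial _
  have hexp : Real.exp |t| = ∑' n : ℕ, |t| ^ n / Nat.factorial n := by
    rw [Real.exp_eq_exp_ℝ]
    exact congrFun NormedSpace.exp_eq_tsum_div |t|
  have htail : (∑ i ∈ Finset.range 2, |t| ^ i / Nat.factorial i) +
      ∑' k : ℕ, |t| ^ (k + 2) / Nat.factorial (k + 2) = ∑' n : ℕ, |t| ^ n / Nat.factorial n :=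
    Summable.sum_add_tsum_nat_add 2 hsum
  have hrange : (∑ i ∈ Finset.range 2, |t| ^ i / Nat.factorial i) = 1 + |t| := by
    simp [Finset.sum_range_succ]
  have htsum : ∑' k : ℕ, |t| ^ (k + 2) / Nat.factorial (k + 2)
      = Real.exp |t| - 1 - |t| := by
    rw [hexp, ← htail, hrange]; ring
  rw [htsum]
  rcases le_or_gt 0 t with ht | ht
  · rw [abs_of_nonneg ht]
  · rw [abs_of_neg ht]
    have hs : -t < Real.sinh (-t) := Real.self_lt_sinh_iff.2 (by linarith)
    rw [Real.sinh_eq, neg_neg] at hs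
    linarith

/-- If `X` is centered with finite positive sub-exponential norm, then for every `c ∈ (0,1)`
and `λ ∈ (−c/‖X‖_se, c/‖X‖_se)` we have `E exp(λX) ≤ exp((λ²/2)·(2‖X‖_se²/(1 − c)))`. -/
theorem mgf_exp_bound_of_subExp
    {Ω : Type*} [MeasureSpace Ω] [IsProbabilityMeasure (volume : Measure Ω)]
    (X : Ω → ℝ) (hXmeas : Measurable X)
    (hXcent : (∫ ω, X ω) = 0)
    -- finiteness of the sub-exponential norm: all absolute moments exist and
    -- the defining family is bounded above
    (hXint : ∀ k : ℕ, 1 ≤ k → Integrable (fun ω => |X ω| ^ k))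
    (hXbdd : BddAbove (Set.range fun k : {k : ℕ // 1 ≤ k} =>
      ((∫ ω, |X ω| ^ (k : ℕ)) / (Nat.factorial k)) ^ (((k : ℕ) : ℝ)⁻¹)))
    (hXpos : 0 < subExpNorm X)
    (c : ℝ) (hc : c ∈ Set.Ioo (0 : ℝ) 1)
    (l : ℝ) (hl : l ∈ Set.Ioo (-(c / subExpNorm X)) (c / subExpNorm X)) :
    (∫ ω, Real.exp (l * X ω)) ≤
      Real.exp (l ^ 2 / 2 * (2 * subExpNorm X ^ 2 / (1 - c))) := by
  obtain ⟨hc0, hc1⟩ := hc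
  obtain ⟨hl1, hl2⟩ := hl
  set K := subExpNorm X with hKdef
  set q := |l| * K with hqdef
  have hq0 : 0 ≤ q := mul_nonneg (abs_nonneg l) hXpos.le
  have hqc : q < c := by
    have h1 : |l| < c / K := abs_lt.2 ⟨hl1, hl2⟩
    have := mul_lt_mul_of_pos_right h1 hXpos
    rwa [div_mul_cancel₀ _ hXpos.ne'] at this
  have hq1 : q < 1 := hqc.trans hc1
  -- moment bound
  have hmom : ∀ k : ℕ, 1 ≤ k →
      (∫ ω, |X ω| ^ k) ≤ K ^ k * Nat.factorial k := by
    intro k hk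
    have hle : ((∫ ω, |X ω| ^ k) / (Nat.factorial k)) ^ (((k : ℕ) : ℝ)⁻¹) ≤ K := by
      rw [hKdef, subExpNorm]
      exact le_ciSup hXbdd (⟨k, hk⟩ : {k : ℕ // 1 ≤ k})
    have hnn : 0 ≤ (∫ ω, |X ω| ^ k) / (Nat.factorial k) :=
      div_nonneg (integral_nonneg fun ω => pow_nonneg (abs_nonneg _) _) (Nat.cast_nonneg _)
    have hkne : k ≠ 0 := by omega
    have h2 := pow_le_pow_left₀ (Real.rpow_nonneg hnn _) hle k
    rw [Real.rpow_inv_natCast_pow hnn hkne] at h2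
    have hfac : (0 : ℝ) < (Nat.factorial k : ℝ) := by
      exact_mod_cast Nat.factorial_pos k
    rw [div_le_iff₀ hfac] at h2
    exact h2
  -- the series terms
  have hQint : ∀ k : ℕ,
      Integrable (fun ω => |l * X ω| ^ (k + 2) / Nat.factorial (k + 2)) := by
    intro k
    apply Integrable.div_const
    have := (hXint (k + 2) (by omega)).const_mul (|l| ^ (k + 2))
    simpa [abs_mul, mul_pow] using this
  have hterm : ∀ k : ℕ,
      (∫ ω, |l * X ω| ^ (k + 2) / Nat.factorial (k + 2)) ≤ q ^ (k + 2) := by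
    intro k
    rw [integral_div]
    have hI : (∫ ω, |l * X ω| ^ (k + 2)) = |l| ^ (k + 2) * ∫ ω, |X ω| ^ (k + 2) := by
      simp_rw [abs_mul, mul_pow]
      exact integral_const_mul _ _
    have hfac : (0 : ℝ) < (Nat.factorial (k + 2) : ℝ) := by
      exact_mod_cast Nat.factorial_pos (k + 2)
    rw [hI, div_le_iff₀ hfac]
    calc |l| ^ (k + 2) * ∫ ω, |X ω| ^ (k + 2)
        ≤ |l| ^ (k + 2) * (K ^ (k + 2) * Nat.factorial (k + 2)) :=
          mul_le_mul_of_nonneg_left (hmom (k + 2) (by omega)) (pow_nonneg (abs_nonneg l) _)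
      _ = q ^ (k + 2) * Nat.factorial (k + 2) := by rw [hqdef, mul_pow]; ring
  -- geometric sum
  set S : ℝ := q ^ 2 / (1 - q) with hSdef
  have hgeom : Summable fun k : ℕ => q ^ k := summable_geometric_of_lt_one hq0 hq1
  have hgeom2 : Summable fun k : ℕ => q ^ (k + 2) := (summable_nat_add_iff 2).2 hgeom
  have hS : (∑' k : ℕ, q ^ (k + 2)) = S := by
    have : (fun k : ℕ => q ^ (k + 2)) = fun k : ℕ => q ^ k * q ^ 2 := by
      funext k; rw [pow_add]
    rw [this, tsum_mul_right, tsum_geometric_of_lt_one hq0 hq1, hSdef, inv_mul_eq_div]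
  have hSnn : 0 ≤ S := div_nonneg (sq_nonneg q) (by linarith)
  -- remainder function
  set h : Ω → ℝ := fun ω => Real.exp (l * X ω) - 1 - l * X ω with hhdef
  have hh0 : ∀ ω, 0 ≤ h ω := by
    intro ω
    have := Real.add_one_le_exp (l * X ω)
    simp only [hhdef]
    linarith
  have hmeash : Measurable h :=
    ((Real.measurable_exp.comp (hXmeas.const_mul l)).sub measurable_const).sub
      (hXmeas.const_mul l)
  have hmeasA : ∀ k : ℕ, AEMeasurable
      (fun ω => ENNReal.ofReal (|l * X ω| ^ (k + 2) / Nat.factorial (k + 2)))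
      (volume : Measure Ω) := by
    intro k
    exact (((hXmeas.const_mul l).abs.pow_const _).div_const _).ennreal_ofReal.aemeasurable
  -- lintegral bound
  have hlin : (∫⁻ ω, ENNReal.ofReal (h ω)) ≤ ENNReal.ofReal S := by
    have h1 : (∫⁻ ω, ENNReal.ofReal (h ω)) ≤
        ∫⁻ ω, ∑' k : ℕ, ENNReal.ofReal (|l * X ω| ^ (k + 2) / Nat.factorial (k + 2)) := by
      apply lintegral_mono
      intro ω
      have hsummable : Summable fun k : ℕ =>
          |l * X ω| ^ (k + 2) / (Nat.factorial (k + 2) : ℝ) :=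
        (summable_nat_add_iff 2).2 (Real.summable_pow_div_factorial _)
      calc ENNReal.ofReal (h ω)
          ≤ ENNReal.ofReal (∑' k : ℕ, |l * X ω| ^ (k + 2) / Nat.factorial (k + 2)) :=
            ENNReal.ofReal_le_ofReal (exp_sub_le_tail (l * X ω))
        _ = ∑' k : ℕ, ENNReal.ofReal (|l * X ω| ^ (k + 2) / Nat.factorial (k + 2)) :=
            ENNReal.ofReal_tsum_of_nonneg
              (fun k => div_nonneg (pow_nonneg (abs_nonneg _) _) (Nat.cast_nonneg _))
              hsummable
    have h2 : (∫⁻ ω, ∑' k : ℕ,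
        ENNReal.ofReal (|l * X ω| ^ (k + 2) / Nat.factorial (k + 2))) =
        ∑' k : ℕ, ∫⁻ ω, ENNReal.ofReal (|l * X ω| ^ (k + 2) / Nat.factorial (k + 2)) :=
      lintegral_tsum hmeasA
    have h3 : ∀ k : ℕ, (∫⁻ ω, ENNReal.ofReal (|l * X ω| ^ (k + 2) / Nat.factorial (k + 2)))
        = ENNReal.ofReal (∫ ω, |l * X ω| ^ (k + 2) / Nat.factorial (k + 2)) := by
      intro k
      exact (ofReal_integral_eq_lintegral_ofReal (hQint k)
        (ae_of_all _ fun ω => div_nonneg (pow_nonneg (abs_nonneg _) _)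
          (Nat.cast_nonneg _))).symm
    calc (∫⁻ ω, ENNReal.ofReal (h ω))
        ≤ ∑' k : ℕ, ∫⁻ ω, ENNReal.ofReal (|l * X ω| ^ (k + 2) / Nat.factorial (k + 2)) :=
          h1.trans h2.le
      _ = ∑' k : ℕ, ENNReal.ofReal (∫ ω, |l * X ω| ^ (k + 2) / Nat.factorial (k + 2)) := by
          simp_rw [h3]
      _ ≤ ∑' k : ℕ, ENNReal.ofReal (q ^ (k + 2)) :=
          ENNReal.tsum_le_tsum fun k => ENNReal.ofReal_le_ofReal (hterm k)
      _ = ENNReal.ofReal (∑' k : ℕ, q ^ (k + 2)) :=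
          (ENNReal.ofReal_tsum_of_nonneg (fun k => pow_nonneg hq0 _) hgeom2).symm
      _ = ENNReal.ofReal S := by rw [hS]
  -- integrability of h
  have hhint : Integrable h := by
    rw [← lintegral_ofReal_ne_top_iff_integrable hmeash.aestronglyMeasurable
      (ae_of_all _ hh0)]
    exact ne_of_lt (lt_of_le_of_lt hlin ENNReal.ofReal_lt_top)
  have hInth : (∫ ω, h ω) ≤ S := by
    rw [integral_eq_lintegral_of_nonneg_ae (ae_of_all _ hh0) hmeash.aestronglyMeasurable]
    calc (∫⁻ ω, ENNReal.ofReal (h ω)).toReal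
        ≤ (ENNReal.ofReal S).toReal :=
          ENNReal.toReal_mono ENNReal.ofReal_ne_top hlin
      _ = S := ENNReal.toReal_ofReal hSnn
  -- integrability of X
  have hXInt : Integrable X := by
    refine Integrable.mono' (g := fun ω => |X ω|) ?_ hXmeas.aestronglyMeasurable
      (ae_of_all _ fun ω => by simp [Real.norm_eq_abs])
    simpa using hXint 1 le_rfl
  -- split the integral
  have hsplit : (∫ ω, Real.exp (l * X ω)) = 1 + l * (∫ ω, X ω) + ∫ ω, h ω := by
    have heq : (fun ω => Real.exp (l * X ω)) = fun ω => (1 + l * X ω) + h ω := by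
      funext ω; simp only [hhdef]; ring
    have hint2 : Integrable (fun ω => l * X ω) (volume : Measure Ω) := hXInt.const_mul l
    have hint1 : Integrable (fun ω => 1 + l * X ω) (volume : Measure Ω) := by
      exact (integrable_const 1).add hint2
    rw [heq, integral_add hint1 hhint, integral_add (integrable_const 1) hint2,
      integral_const, integral_const_mul]
    simp
  have hSle : S ≤ l ^ 2 * K ^ 2 / (1 - c) := by
    have hq2 : q ^ 2 = l ^ 2 * K ^ 2 := by rw [hqdef, mul_pow, sq_abs]
    rw [hSdef, hq2]
    exact div_le_div_of_nonneg_left (by positivity) (by linarith) (by linarith)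
  have hfinal : l ^ 2 / 2 * (2 * K ^ 2 / (1 - c)) = l ^ 2 * K ^ 2 / (1 - c) := by ring
  rw [hsplit, hXcent, hfinal]
  calc 1 + l * 0 + ∫ ω, h ω ≤ 1 + 0 + S := by simpa using hInth
    _ ≤ 1 + l ^ 2 * K ^ 2 / (1 - c) := by linarith
    _ ≤ Real.exp (l ^ 2 * K ^ 2 / (1 - c)) := by
        have := Real.add_one_le_exp (l ^ 2 * K ^ 2 / (1 - c))
        linarith
end

section
/- If X is a real random variable with |X| ≤ 1 almost surely, and Y is a centered sub-Gaussian real random variable independent of X, then τ(X·Y) ≤ τ(Y). -/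
open MeasureTheory ProbabilityTheory Real

/-- `X` is sub-Gaussian if some `t > 0` witnesses the defining bound, i.e. `τ(X) < ∞`. -/
def IsSubGaussian {Ω : Type*} [MeasureSpace Ω] (X : Ω → ℝ) : Prop :=
  ∃ t : ℝ, 0 < t ∧ ∀ l : ℝ,
    (∫ ω, Real.exp (l * (X ω - ∫ ω', X ω'))) ≤ Real.exp (l ^ 2 * t ^ 2 / 2)

/-- If `|X| ≤ 1` almost surely and `Y` is a centered sub-Gaussian random variable
independent of `X`, then `τ(X·Y) ≤ τ(Y)`. -/
theorem subGaussianNorm_mul_le_of_abs_le_one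
    {Ω : Type*} [MeasureSpace Ω] [IsProbabilityMeasure (volume : Measure Ω)]
    (X Y : Ω → ℝ)
    (hXmeas : Measurable X) (hYmeas : Measurable Y)
    (hXbd : ∀ᵐ ω, |X ω| ≤ 1)
    (hYcent : (∫ ω, Y ω) = 0)
    (hYsub : IsSubGaussian Y)
    (hindep : IndepFun X Y volume) :
    subGaussianNorm (fun ω => X ω * Y ω) ≤ subGaussianNorm Y := by
  classical
  obtain ⟨t0, ht0pos, ht0⟩ := hYsub
  have hXYcent : (∫ ω, X ω * Y ω) = 0 := by
    have h : (∫ ω, X ω * Y ω) = (∫ ω, X ω) * ∫ ω, Y ω :=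
      hindep.integral_fun_mul_eq_mul_integral hXmeas.aestronglyMeasurable hYmeas.aestronglyMeasurable
    rw [h, hYcent, mul_zero]
  set μX := volume.map X with hμX
  set μY := volume.map Y with hμY
  have hPX : IsProbabilityMeasure μX := Measure.isProbabilityMeasure_map hXmeas.aemeasurable
  have hPY : IsProbabilityMeasure μY := Measure.isProbabilityMeasure_map hYmeas.aemeasurable
  have hmap : volume.map (fun ω => (X ω, Y ω)) = μX.prod μY :=
    (indepFun_iff_map_prod_eq_prod_map_map hXmeas.aemeasurable hYmeas.aemeasurable).mp hindep
  apply csInf_le_csInf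
  · exact ⟨0, fun t ht => ht.1.le⟩
  · exact ⟨t0, ht0pos, ht0⟩
  rintro t ⟨htpos, hbd⟩
  have hbd' : ∀ l : ℝ, (∫ ω, exp (l * Y ω)) ≤ exp (l ^ 2 * t ^ 2 / 2) := by
    intro l; simpa [hYcent] using hbd l
  -- the moment generating lintegral of Y at λ is either infinite or bounded
  have hGcase : ∀ l : ℝ, (∫⁻ ω, ENNReal.ofReal (exp (l * Y ω))) = ⊤ ∨
      (∫⁻ ω, ENNReal.ofReal (exp (l * Y ω))) ≤ ENNReal.ofReal (exp (l ^ 2 * t ^ 2 / 2)) := by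
    intro l
    by_cases hint : Integrable (fun ω => exp (l * Y ω)) volume
    · right
      rw [← ofReal_integral_eq_lintegral_ofReal hint (ae_of_all _ fun ω => (exp_pos _).le)]
      exact ENNReal.ofReal_le_ofReal (hbd' l)
    · left
      by_contra h
      refine hint ⟨(hYmeas.const_mul l).exp.aestronglyMeasurable, ?_⟩
      rw [hasFiniteIntegral_iff_ofReal (ae_of_all _ fun ω => (exp_pos _).le)]
      exact lt_top_iff_ne_top.mpr h
  refine ⟨htpos, fun l => ?_⟩
  simp only
  rw [hXYcent]
  simp only [sub_zero]
  by_cases hint : Integrable (fun ω => exp (l * (X ω * Y ω))) volume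
  swap
  · rw [integral_undef hint]; positivity
  have hmeas2 : Measurable fun p : ℝ × ℝ => ENNReal.ofReal (exp (l * (p.1 * p.2))) :=
    ((measurable_fst.mul measurable_snd).const_mul l).exp.ennreal_ofReal
  have heq : (∫⁻ ω, ENNReal.ofReal (exp (l * (X ω * Y ω))))
      = ∫⁻ x, ∫⁻ y, ENNReal.ofReal (exp (l * (x * y))) ∂μY ∂μX := by
    rw [← lintegral_prod _ hmeas2.aemeasurable, ← hmap,
      lintegral_map hmeas2 (hXmeas.prodMk hYmeas)]
  have hofReal : ENNReal.ofReal (∫ ω, exp (l * (X ω * Y ω)))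
      = ∫⁻ ω, ENNReal.ofReal (exp (l * (X ω * Y ω))) :=
    ofReal_integral_eq_lintegral_ofReal hint (ae_of_all _ fun ω => (exp_pos _).le)
  have hGx : ∀ x : ℝ, (∫⁻ y, ENNReal.ofReal (exp (l * (x * y))) ∂μY)
      = ∫⁻ ω, ENNReal.ofReal (exp ((l * x) * Y ω)) := by
    intro x
    have hm : Measurable fun y : ℝ => ENNReal.ofReal (exp (l * (x * y))) := by fun_prop
    rw [hμY, lintegral_map hm hYmeas]
    simp_rw [mul_assoc]
  have hmeasG : Measurable fun x : ℝ => ∫⁻ y, ENNReal.ofReal (exp (l * (x * y))) ∂μY :=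
    Measurable.lintegral_prod_right (f := fun x y => ENNReal.ofReal (exp (l * (x * y)))) hmeas2
  have hfin_ae : ∀ᵐ x ∂μX, (∫⁻ y, ENNReal.ofReal (exp (l * (x * y))) ∂μY) < ⊤ := by
    refine ae_lt_top hmeasG ?_
    rw [← heq, ← hofReal]
    exact ENNReal.ofReal_ne_top
  have hbd_ae : ∀ᵐ x ∂μX, |x| ≤ 1 := by
    rw [hμX, ae_map_iff hXmeas.aemeasurable (measurableSet_le (by fun_prop) measurable_const)]
    exact hXbd
  have hpt : ∀ᵐ x ∂μX, (∫⁻ y, ENNReal.ofReal (exp (l * (x * y))) ∂μY)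
      ≤ ENNReal.ofReal (exp (l ^ 2 * t ^ 2 / 2)) := by
    filter_upwards [hbd_ae, hfin_ae] with x hx hfin
    rcases hGcase (l * x) with htop | hle
    · rw [hGx x] at hfin
      exact absurd htop hfin.ne
    · rw [hGx x]
      refine hle.trans (ENNReal.ofReal_le_ofReal (exp_le_exp.mpr ?_))
      have hx2 : x ^ 2 ≤ 1 := by
        have := abs_le.mp hx
        nlinarith
      have ht2 : (0:ℝ) ≤ t ^ 2 := sq_nonneg t
      have hl2 : (0:ℝ) ≤ l ^ 2 := sq_nonneg l
      have h1 : (l * x) ^ 2 ≤ l ^ 2 := by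
        rw [mul_pow]
        exact mul_le_of_le_one_right hl2 hx2
      nlinarith [h1, ht2]
  rw [← ENNReal.ofReal_le_ofReal_iff (exp_pos _).le, hofReal, heq]
  calc (∫⁻ x, ∫⁻ y, ENNReal.ofReal (exp (l * (x * y))) ∂μY ∂μX)
      ≤ ∫⁻ _x, ENNReal.ofReal (exp (l ^ 2 * t ^ 2 / 2)) ∂μX := lintegral_mono_ae hpt
    _ = ENNReal.ofReal (exp (l ^ 2 * t ^ 2 / 2)) := by simp
end
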